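/- For real c > 0 and fixed x = (x₁,…,xₙ) ∈ ℝⁿ, ∫_{ℝⁿ} e^{−Σᵢ ỹᵢ²} Δ(ỹ + c·x) dỹ = c^{n(n−1)/2} Δ(x) π^{n/2}, where Δ is the Vandermonde determinant. -/

import Mathlib

open MeasureTheory Real

/-- The Vandermonde determinant `∏_{i<j} (x i - x j)`. -/
noncomputable def vandermondeProd (n : ℕ) (x : Fin n → ℝ) : ℝ :=
  ∏ p ∈ Finset.univ.filter (fun p : Fin n × Fin n => p.1 < p.2), (x p.1 - x p.2)

open Finset Polynomial

noncomputable def gaussMoment (m : ℕ) : ℝ := ∫ t : ℝ, t ^ m * Real.exp (-t ^ 2)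

lemma gaussMoment_zero : gaussMoment 0 = Real.sqrt π := by
  simp only [gaussMoment, pow_zero, one_mul]
  simpa using integral_gaussian 1

lemma integrable_pow_gauss (m : ℕ) : Integrable (fun t : ℝ => t ^ m * Real.exp (-t ^ 2)) := by
  have h := integrable_rpow_mul_exp_neg_mul_sq (b := 1) one_pos (s := (m:ℝ))
    (by linarith [Nat.cast_nonneg (α := ℝ) m])
  simp_rw [Real.rpow_natCast, neg_mul, one_mul] at h
  exact h

noncomputable def gFun (k : ℕ) (a : ℝ) (t : ℝ) : ℝ := Real.exp (-t ^ 2) * (t + a) ^ k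

lemma gFun_eq_sum (k : ℕ) (a : ℝ) (t : ℝ) :
    gFun k a t = ∑ m ∈ Finset.range (k + 1),
      (t ^ m * Real.exp (-t ^ 2)) * (a ^ (k - m) * (k.choose m : ℝ)) := by
  simp only [gFun, add_pow, Finset.mul_sum]
  exact Finset.sum_congr rfl fun m _ => by ring

lemma integrable_gFun (k : ℕ) (a : ℝ) : Integrable (gFun k a) := by
  have : gFun k a = fun t => ∑ m ∈ Finset.range (k + 1),
      (t ^ m * Real.exp (-t ^ 2)) * (a ^ (k - m) * (k.choose m : ℝ)) := by
    funext t; exact gFun_eq_sum k a t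
  rw [this]
  exact integrable_finset_sum _ fun m _ => (integrable_pow_gauss m).mul_const _

lemma integral_gFun (k : ℕ) (a : ℝ) :
    ∫ t : ℝ, gFun k a t = ∑ m ∈ Finset.range (k + 1),
      gaussMoment m * (a ^ (k - m) * (k.choose m : ℝ)) := by
  have : ∫ t : ℝ, gFun k a t = ∫ t : ℝ, ∑ m ∈ Finset.range (k + 1),
      (t ^ m * Real.exp (-t ^ 2)) * (a ^ (k - m) * (k.choose m : ℝ)) := by
    congr 1; funext t; exact gFun_eq_sum k a t
  rw [this, integral_finset_sum _ fun m _ => (integrable_pow_gauss m).mul_const _]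
  exact Finset.sum_congr rfl fun m _ => by rw [integral_mul_const]; rfl

/-- A monic polynomial whose `√π`-multiple evaluates to the gaussian integral of `gFun`. -/
noncomputable def QPoly (k : ℕ) : ℝ[X] :=
  X ^ k + ∑ m ∈ Finset.range k,
    C ((Real.sqrt π)⁻¹ * gaussMoment (m + 1) * (k.choose (m + 1) : ℝ)) * X ^ (k - (m + 1))

lemma QPoly_degree_lt (k : ℕ) :
    (∑ m ∈ Finset.range k,
      C ((Real.sqrt π)⁻¹ * gaussMoment (m + 1) * (k.choose (m + 1) : ℝ)) * X ^ (k - (m + 1)) :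
        ℝ[X]).degree < (X ^ k : ℝ[X]).degree := by
  rw [degree_X_pow]
  refine lt_of_le_of_lt (Polynomial.degree_sum_le _ _) ?_
  rw [Finset.sup_lt_iff (by exact_mod_cast WithBot.bot_lt_coe k)]
  intro m hm
  refine lt_of_le_of_lt (degree_C_mul_X_pow_le _ _) ?_
  exact_mod_cast Nat.sub_lt_of_pos_le (Nat.succ_pos m) (Finset.mem_range.mp hm)

lemma QPoly_monic (k : ℕ) : (QPoly k).Monic :=
  (monic_X_pow k).add_of_left (QPoly_degree_lt k)

lemma QPoly_natDegree (k : ℕ) : (QPoly k).natDegree = k := by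
  have h := Polynomial.degree_add_eq_left_of_degree_lt (QPoly_degree_lt k)
  have : (QPoly k).degree = k := by rw [QPoly, h, degree_X_pow]
  exact natDegree_eq_of_degree_eq_some this

lemma sqrt_pi_mul_eval (k : ℕ) (a : ℝ) :
    Real.sqrt π * (QPoly k).eval a = ∫ t : ℝ, gFun k a t := by
  have hπ : Real.sqrt π ≠ 0 := by positivity
  rw [integral_gFun, Finset.sum_range_succ']
  simp only [QPoly, eval_add, eval_pow, eval_X, eval_finset_sum, eval_mul, eval_C,
    Nat.sub_zero, Nat.choose_zero_right, Nat.cast_one, mul_one, gaussMoment_zero]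
  rw [mul_add, Finset.mul_sum]
  rw [add_comm]
  congr 1
  exact Finset.sum_congr rfl fun m _ => by field_simp

lemma main_integral (n : ℕ) (v : Fin n → ℝ) :
    ∫ y : Fin n → ℝ, (∏ i, Real.exp (-(y i) ^ 2)) *
        (Matrix.vandermonde (fun i => y i + v i)).det
      = (Real.sqrt π) ^ n * (Matrix.vandermonde v).det := by
  have hdet : ∀ w : Fin n → ℝ, (Matrix.vandermonde w).det
      = ∑ σ : Equiv.Perm (Fin n), ((Equiv.Perm.sign σ : ℤ) : ℝ) * ∏ j, w (σ j) ^ (j : ℕ) := by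
    intro w
    rw [Matrix.det_apply]
    simp [Matrix.vandermonde, Units.smul_def, zsmul_eq_mul]
  have hfun : (fun y : Fin n → ℝ => (∏ i, Real.exp (-(y i) ^ 2)) *
        (Matrix.vandermonde (fun i => y i + v i)).det)
      = fun y => ∑ σ : Equiv.Perm (Fin n),
          ((Equiv.Perm.sign σ : ℤ) : ℝ) * ∏ i, gFun ((σ⁻¹ i : Fin n) : ℕ) (v i) (y i) := by
    funext y
    rw [hdet, Finset.mul_sum]
    refine Finset.sum_congr rfl fun σ _ => ?_
    have h1 : (∏ i, gFun ((σ⁻¹ i : Fin n) : ℕ) (v i) (y i))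
        = ∏ j : Fin n, gFun (j : ℕ) (v (σ j)) (y (σ j)) := by
      rw [← Equiv.prod_comp σ (fun i => gFun ((σ⁻¹ i : Fin n) : ℕ) (v i) (y i))]
      simp
    have h2 : (∏ i, Real.exp (-(y i) ^ 2)) = ∏ j : Fin n, Real.exp (-(y (σ j)) ^ 2) :=
      (Equiv.prod_comp σ (fun i => Real.exp (-(y i) ^ 2))).symm
    rw [h1, h2]
    simp only [gFun, Finset.prod_mul_distrib]
    ring
  rw [hfun, integral_finset_sum _ fun σ _ =>
    (Integrable.fintype_prod (fun i => integrable_gFun ((σ⁻¹ i : Fin n) : ℕ) (v i))).const_mul _]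
  have hterm : ∀ σ : Equiv.Perm (Fin n),
      (∫ y : Fin n → ℝ, ((Equiv.Perm.sign σ : ℤ) : ℝ) *
        ∏ i, gFun ((σ⁻¹ i : Fin n) : ℕ) (v i) (y i))
      = ((Equiv.Perm.sign σ : ℤ) : ℝ) * ((Real.sqrt π) ^ n *
          ∏ i, (QPoly ((σ⁻¹ i : Fin n) : ℕ)).eval (v i)) := by
    intro σ
    rw [integral_const_mul, integral_fintype_prod_volume_eq_prod (ι := Fin n)
      (fun i => gFun ((σ⁻¹ i : Fin n) : ℕ) (v i))]
    congr 1
    rw [show ∀ P : ℝ, (Real.sqrt π) ^ n * P = (Real.sqrt π) ^ (Fintype.card (Fin n)) * P by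
      simp [Fintype.card_fin]]
    rw [← Finset.card_univ, ← Finset.prod_const, ← Finset.prod_mul_distrib]
    exact Finset.prod_congr rfl fun i _ => (sqrt_pi_mul_eval _ _).symm
  simp_rw [hterm]
  have hswap : ∑ σ : Equiv.Perm (Fin n), ((Equiv.Perm.sign σ : ℤ) : ℝ) *
      ((Real.sqrt π) ^ n * ∏ i, (QPoly ((σ⁻¹ i : Fin n) : ℕ)).eval (v i))
      = (Real.sqrt π) ^ n * ∑ σ : Equiv.Perm (Fin n), ((Equiv.Perm.sign σ : ℤ) : ℝ) *
          ∏ i, (QPoly ((σ⁻¹ i : Fin n) : ℕ)).eval (v i) := by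
    rw [Finset.mul_sum]
    exact Finset.sum_congr rfl fun σ _ => by ring
  rw [hswap]
  congr 1
  have hinv : ∑ σ : Equiv.Perm (Fin n), ((Equiv.Perm.sign σ : ℤ) : ℝ) *
      ∏ i, (QPoly ((σ⁻¹ i : Fin n) : ℕ)).eval (v i)
      = ∑ τ : Equiv.Perm (Fin n), ((Equiv.Perm.sign τ : ℤ) : ℝ) *
          ∏ i, (QPoly ((τ i : Fin n) : ℕ)).eval (v i) := by
    rw [← Equiv.sum_comp (Equiv.inv (Equiv.Perm (Fin n)))
      (fun σ => ((Equiv.Perm.sign σ : ℤ) : ℝ) * ∏ i, (QPoly ((σ⁻¹ i : Fin n) : ℕ)).eval (v i))]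
    simp [Equiv.Perm.sign_inv]
  rw [hinv]
  have := Matrix.det_eval_matrixOfPolynomials_eq_det_vandermonde v
    (fun j : Fin n => QPoly (j : ℕ)) (fun i => QPoly_natDegree _) (fun i => QPoly_monic _)
  rw [this, ← Matrix.det_transpose, Matrix.det_apply]
  simp only [Matrix.transpose_apply, Matrix.of_apply, Units.smul_def, zsmul_eq_mul]

lemma vandermondeProd_eq_sign_mul_det (n : ℕ) (w : Fin n → ℝ) :
    vandermondeProd n w = (∏ i : Fin n, ∏ _j ∈ Finset.Ioi i, (-1 : ℝ)) *
      (Matrix.vandermonde w).det := by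
  have hfilter : ∀ f : Fin n → Fin n → ℝ,
      ∏ p ∈ Finset.univ.filter (fun p : Fin n × Fin n => p.1 < p.2), f p.1 p.2
        = ∏ i : Fin n, ∏ j ∈ Finset.Ioi i, f i j := by
    intro f
    rw [Finset.prod_filter, ← Finset.univ_product_univ, Finset.prod_product]
    congr 1; ext i
    rw [← Finset.filter_lt_eq_Ioi, Finset.prod_filter]
  rw [vandermondeProd, hfilter (fun i j => w i - w j), Matrix.det_vandermonde]
  rw [← Finset.prod_mul_distrib]
  refine Finset.prod_congr rfl fun i _ => ?_
  rw [← Finset.prod_mul_distrib]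
  exact Finset.prod_congr rfl fun j _ => by ring

lemma det_vandermonde_smul (n : ℕ) (c : ℝ) (x : Fin n → ℝ) :
    (Matrix.vandermonde (fun i => c * x i)).det
      = c ^ (n * (n - 1) / 2) * (Matrix.vandermonde x).det := by
  have hmat : Matrix.vandermonde (fun i => c * x i)
      = Matrix.vandermonde x * Matrix.diagonal (fun j : Fin n => c ^ (j : ℕ)) := by
    ext i j
    simp [Matrix.vandermonde, Matrix.mul_apply, Matrix.diagonal, mul_pow, mul_comm]
  rw [hmat, Matrix.det_mul, Matrix.det_diagonal, Finset.prod_pow_eq_pow_sum]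
  have hsum : (∑ i : Fin n, (i : ℕ)) = n * (n - 1) / 2 := by
    rw [Fin.sum_univ_eq_sum_range (fun i => i) n]
    have := Finset.sum_range_id_mul_two n
    omega
  rw [hsum, mul_comm]

theorem gaussian_integral_scaled_shifted_vandermonde (n : ℕ) (c : ℝ) (hc : 0 < c)
    (x : Fin n → ℝ) :
    ∫ y : Fin n → ℝ, Real.exp (-∑ i, (y i) ^ 2) *
        vandermondeProd n (fun i => y i + c * x i)
      = c ^ (n * (n - 1) / 2) * vandermondeProd n x * Real.pi ^ ((n : ℝ) / 2) := by
  set S : ℝ := ∏ i : Fin n, ∏ _j ∈ Finset.Ioi i, (-1 : ℝ) with hS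
  have h0 : (fun y : Fin n → ℝ => Real.exp (-∑ i, (y i) ^ 2) *
        vandermondeProd n (fun i => y i + c * x i))
      = fun y => S * ((∏ i, Real.exp (-(y i) ^ 2)) *
          (Matrix.vandermonde (fun i => y i + c * x i)).det) := by
    funext y
    have hexp : Real.exp (-∑ i, (y i) ^ 2) = ∏ i, Real.exp (-(y i) ^ 2) := by
      rw [← Real.exp_sum]
      congr 1
      simp
    rw [hexp, vandermondeProd_eq_sign_mul_det]
    ring
  rw [h0, integral_const_mul, main_integral n (fun i => c * x i),
    det_vandermonde_smul n c x, vandermondeProd_eq_sign_mul_det n x]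
  have hpow : (Real.sqrt π) ^ n = π ^ ((n : ℝ) / 2) := by
    rw [Real.sqrt_eq_rpow, ← Real.rpow_natCast (π ^ ((1:ℝ)/2)) n, ← Real.rpow_mul pi_pos.le]
    ring_nf
  rw [← hpow, ← hS]
  ring
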